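/- arXiv:2008.07676 — 3 statements merged into one kernel-verified Lean document; each statement's English description precedes it below -/
import Mathlib

section
/- Let A be a unital C*-algebra with a state μ, and define N(a) = ‖a − μ(a)·1‖ for a ∈ A. Then N is a seminorm on A satisfying the (2,0)-quasi-Leibniz inequality: for all self-adjoint a, b ∈ A, N(ab) ≤ 2(‖a‖·N(b) + N(a)·‖b‖). -/
open scoped ComplexOrder

/-- If `mu` is a state on a unital C*-algebra `A`, then `N(a) = ‖a − mu(a)·1‖` is a seminorm
satisfying the `(2,0)`-quasi-Leibniz inequality on self-adjoint elements. -/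
theorem stmt5 {A : Type*} [NormedRing A] [StarRing A] [CStarRing A] [NormedAlgebra ℂ A]
    [StarModule ℂ A] [CompleteSpace A] [PartialOrder A] [StarOrderedRing A]
    (mu : A →ₗ[ℂ] ℂ) (hmu_one : mu 1 = 1) (hmu_pos : ∀ a : A, 0 ≤ a → 0 ≤ mu a) :
    let N : A → ℝ := fun a => ‖a - mu a • (1 : A)‖
    (∀ a b : A, N (a + b) ≤ N a + N b) ∧
    (∀ (c : ℂ) (a : A), N (c • a) = ‖c‖ * N a) ∧
    (∀ a b : A, IsSelfAdjoint a → IsSelfAdjoint b →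
      N (a * b) ≤ 2 * (‖a‖ * N b + N a * ‖b‖)) := by
  letI : CStarAlgebra A := {}
  have hnt : Nontrivial A := by
    refine ⟨1, 0, fun h => ?_⟩
    apply one_ne_zero (α := ℂ)
    rw [← hmu_one, h, map_zero]
  have mu_mono : ∀ {x y : A}, x ≤ y → mu x ≤ mu y := by
    intro x y h
    have := hmu_pos (y - x) (sub_nonneg.mpr h)
    rw [map_sub] at this
    exact sub_nonneg.mp this
  have mu_smul_one : ∀ c : ℂ, mu (c • (1 : A)) = c := by
    intro c; rw [map_smul, hmu_one, smul_eq_mul, mul_one]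
  have mu_nonneg_le : ∀ c : A, 0 ≤ c → mu c ≤ (‖c‖ : ℂ) := by
    intro c hc
    have hsa : IsSelfAdjoint c := .of_nonneg hc
    have h1 : c ≤ algebraMap ℝ A ‖c‖ := hsa.le_algebraMap_norm_self
    have := mu_mono h1
    rwa [show algebraMap ℝ A ‖c‖ = ((‖c‖ : ℂ)) • (1 : A) by
      simp [Algebra.algebraMap_eq_smul_one], mu_smul_one] at this
  have mu_real : ∀ x : A, IsSelfAdjoint x → (starRingEnd ℂ) (mu x) = mu x := by
    intro x hx
    have hdecomp : x⁺ - x⁻ = x := CFC.posPart_sub_negPart x hx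
    have h1 := hmu_pos _ (CFC.posPart_nonneg x)
    have h2 := hmu_pos _ (CFC.negPart_nonneg x)
    rw [← hdecomp, map_sub]
    rw [Complex.nonneg_iff] at h1 h2
    apply Complex.ext <;> simp [Complex.conj_re, Complex.conj_im, ← h1.2, ← h2.2]
  have mu_star : ∀ x : A, mu (star x) = (starRingEnd ℂ) (mu x) := by
    intro x
    have hh : IsSelfAdjoint (x + star x) := by
      rw [IsSelfAdjoint]; simp [star_add, add_comm]
    have hk : IsSelfAdjoint (Complex.I • (star x - x)) := by
      rw [IsSelfAdjoint]
      simp [star_smul, star_sub, smul_sub, Complex.conj_I, neg_smul, sub_eq_add_neg, neg_sub]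
      module
    have e1 := mu_real _ hh
    have e2 := mu_real _ hk
    rw [map_add] at e1
    rw [map_smul, map_sub] at e2
    have e1' : (starRingEnd ℂ) (mu x) + (starRingEnd ℂ) (mu (star x)) = mu x + mu (star x) := by
      simpa [map_add] using e1
    have e2' : (starRingEnd ℂ) (mu (star x)) - (starRingEnd ℂ) (mu x)
        = -(mu (star x) - mu x) := by
      rw [smul_eq_mul, map_mul, Complex.conj_I] at e2
      simp only [map_sub] at e2
      linear_combination Complex.I * e2 +
        ((starRingEnd ℂ) (mu (star x)) - (starRingEnd ℂ) (mu x) + (mu (star x) - mu x)) *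
          Complex.I_mul_I
    linear_combination (e2' - e1') / 2
  have mu_bound : ∀ x : A, ‖mu x‖ ≤ ‖x‖ := by
    intro x
    set c := mu x with hc
    have key : mu (star (x - c • 1) * (x - c • 1)) = mu (star x * x) - (‖c‖ : ℂ)^2 := by
      have hxy : star (x - c • 1) * (x - c • 1)
          = star x * x - (starRingEnd ℂ) c • x - c • star x
            + ((starRingEnd ℂ) c * c) • (1 : A) := by
        simp only [star_sub, star_smul, star_one, sub_mul, mul_sub, smul_mul_assoc,
          mul_smul_comm, one_mul, mul_one, smul_smul, starRingEnd_apply]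
        module
      rw [hxy, map_add, map_sub, map_sub, map_smul, map_smul, mu_smul_one, mu_star]
      simp only [smul_eq_mul, ← hc]
      linear_combination -(Complex.mul_conj' c)
    have hpos := hmu_pos _ (star_mul_self_nonneg (x - c • 1))
    rw [key] at hpos
    have hle : ((‖c‖ : ℂ))^2 ≤ mu (star x * x) := by
      rw [← sub_nonneg]; exact hpos
    have h2 : mu (star x * x) ≤ ((‖star x * x‖ : ℂ)) := mu_nonneg_le _ (star_mul_self_nonneg x)
    have h3 : ((‖c‖ : ℂ))^2 ≤ ((‖x‖ : ℂ))^2 := by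
      calc ((‖c‖ : ℂ))^2 ≤ mu (star x * x) := hle
        _ ≤ ((‖star x * x‖ : ℂ)) := h2
        _ = ((‖x‖ : ℂ))^2 := by rw [CStarRing.norm_star_mul_self]; push_cast; ring
    have h3' : ‖c‖^2 ≤ ‖x‖^2 := by
      exact_mod_cast h3
    nlinarith [norm_nonneg c, norm_nonneg x]
  intro N
  have hN : ∀ a : A, N a = ‖a - mu a • (1 : A)‖ := fun _ => rfl
  have hNle : ∀ a : A, N a ≤ 2 * ‖a‖ := by
    intro a
    rw [hN]
    calc ‖a - mu a • (1 : A)‖ ≤ ‖a‖ + ‖mu a • (1 : A)‖ := norm_sub_le _ _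
      _ = ‖a‖ + ‖mu a‖ * ‖(1 : A)‖ := by rw [norm_smul]
      _ ≤ ‖a‖ + ‖a‖ * 1 := by
          rw [norm_one]
          have := mu_bound a
          nlinarith [norm_nonneg (mu a)]
      _ = 2 * ‖a‖ := by ring
  refine ⟨?_, ?_, ?_⟩
  · intro a b
    simp only [hN]
    have : a + b - mu (a + b) • (1 : A)
        = (a - mu a • (1 : A)) + (b - mu b • (1 : A)) := by
      rw [map_add]; module
    rw [this]
    exact norm_add_le _ _
  · intro c a
    simp only [hN]
    have : c • a - mu (c • a) • (1 : A) = c • (a - mu a • (1 : A)) := by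
      simp only [map_smul, smul_eq_mul]; module
    rw [this, norm_smul]
  · intro a b ha hb
    set x := a - mu a • (1 : A) with hx
    set y := b - mu b • (1 : A) with hy
    have hmuxy : mu (x * y) = mu (a * b) - mu a * mu b := by
      have hexp : x * y = a * b - mu b • a - mu a • b + (mu a * mu b) • (1 : A) := by
        rw [hx, hy]
        simp only [sub_mul, mul_sub, smul_mul_assoc, mul_smul_comm, one_mul, mul_one,
          smul_smul]
        module
      rw [hexp, map_add, map_sub, map_sub, map_smul, map_smul, mu_smul_one]
      simp only [smul_eq_mul]
      ring
    have hid : a * b - mu (a * b) • (1 : A) = x * b + mu a • y - (mu (x * y)) • (1 : A) := by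
      rw [hmuxy, hx, hy]
      simp only [sub_mul, smul_mul_assoc, one_mul, smul_sub, sub_smul, smul_smul]
      module
    have hb1 : ‖x * b‖ ≤ N a * ‖b‖ := by
      rw [hN, ← hx]; exact norm_mul_le _ _
    have hb2 : ‖mu a • y‖ ≤ ‖a‖ * N b := by
      rw [norm_smul, hN, ← hy]
      exact mul_le_mul_of_nonneg_right (mu_bound a) (norm_nonneg y)
    have hb3 : ‖(mu (x * y)) • (1 : A)‖ ≤ N a * N b := by
      rw [norm_smul, norm_one, mul_one]
      calc ‖mu (x * y)‖ ≤ ‖x * y‖ := mu_bound _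
        _ ≤ ‖x‖ * ‖y‖ := norm_mul_le _ _
        _ = N a * N b := by rw [hN a, hN b, ← hx, ← hy]
    have hNab : N (a * b) ≤ N a * ‖b‖ + ‖a‖ * N b + N a * N b := by
      rw [hN, hid]
      calc ‖x * b + mu a • y - (mu (x * y)) • (1 : A)‖
          ≤ ‖x * b + mu a • y‖ + ‖(mu (x * y)) • (1 : A)‖ := norm_sub_le _ _
        _ ≤ ‖x * b‖ + ‖mu a • y‖ + ‖(mu (x * y)) • (1 : A)‖ := by
            have := norm_add_le (x * b) (mu a • y); linarith
        _ ≤ N a * ‖b‖ + ‖a‖ * N b + N a * N b := by linarith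
    have hNaNb : N a * N b ≤ ‖a‖ * N b + N a * ‖b‖ := by
      have h1 : 0 ≤ N a := norm_nonneg _
      have h2 : 0 ≤ N b := norm_nonneg _
      nlinarith [hNle a, hNle b, mul_nonneg h1 h2]
    linarith
end

section
/- Let σ : ℕ∖{0} → ℕ with σ(m) ≥ 2 for all m, and let ⊠σ_m = ∏_{j=1}^m σ(j). For m ≥ 1, let C_σ,m be the C*-algebra of continuous 1-periodic functions ℝ → M_{⊠σ_m}(ℂ). Define α_{σ,m−1}(a)(t) = U_{σ,m}(t) · diag(a(t/σ_m), a((t+1)/σ_m), …, a((t+σ_m−1)/σ_m)) · U_{σ,m}(t)*, where U_{σ,m}(t) = U_{σ_m}(t) ⊗ I_{⊠σ_{m−1}}. Then α_{σ,m−1} maps C_σ,{m−1} into C_σ,m (i.e., α_{σ,m−1}(a) is 1-periodic whenever a is) and is a unital injective *-homomorphism. -/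
noncomputable section

/-- The unitary U_m(t) in M_m(C) with (j,k) entry (1/sqrt m)exp(2 pi i (m-j)(t+k-1)/m),
realized on Fin m (0-based). -/
def Umat (m : ℕ) (t : ℝ) : Matrix (Fin m) (Fin m) ℂ :=
  Matrix.of fun j k =>
    ((1 / Real.sqrt m : ℝ) : ℂ) *
      Complex.exp (2 * (Real.pi : ℂ) * Complex.I *
        (((m : ℂ) - (((j : ℕ) : ℂ) + 1)) * ((t : ℂ) + (((k : ℕ) : ℂ) + 1) - 1) / (m : ℂ)))

namespace BDaux

open Complex Matrix

lemma exp_ne_one (s : ℕ) (hs : 0 < s) (n : ℤ) (hn : n ≠ 0) (hns : n.natAbs < s) :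
    Complex.exp (2 * (Real.pi : ℂ) * Complex.I * (n / s)) ≠ 1 := by
  rw [Ne, Complex.exp_eq_one_iff]
  rintro ⟨k, hk⟩
  have hs' : (s : ℂ) ≠ 0 := Nat.cast_ne_zero.mpr hs.ne'
  have h2 : (2 * (Real.pi : ℂ) * Complex.I) ≠ 0 := by
    simp [Real.pi_ne_zero, Complex.I_ne_zero, Complex.ofReal_ne_zero]
  have h3 : (n : ℂ) / s = k := mul_left_cancel₀ h2 (by rw [hk]; ring)
  have h4 : (n : ℂ) = k * s := by field_simp at h3; rw [mul_comm]; exact_mod_cast h3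
  have h5 : n = k * s := by exact_mod_cast h4
  have h6 : n.natAbs = k.natAbs * s := by rw [h5, Int.natAbs_mul, Int.natAbs_natCast]
  rcases Nat.eq_zero_or_pos k.natAbs with h | h
  · exact hn (by simpa [Int.natAbs_eq_zero.mp h] using h5)
  · have : s ≤ n.natAbs := by calc s = 1 * s := (one_mul s).symm
      _ ≤ k.natAbs * s := Nat.mul_le_mul_right s h
      _ = n.natAbs := h6.symm
    omega

lemma sum_exp (s : ℕ) (hs : 0 < s) (j k : Fin s) :
    ∑ l : Fin s, Complex.exp (2 * (Real.pi : ℂ) * Complex.I *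
        (((((k : ℕ) : ℂ) - ((j : ℕ) : ℂ)) * ((l : ℕ) : ℂ)) / s)) =
      if j = k then (s : ℂ) else 0 := by
  have hs' : (s : ℂ) ≠ 0 := Nat.cast_ne_zero.mpr hs.ne'
  set n : ℤ := (k : ℕ) - (j : ℕ) with hn
  have hcast : (((k : ℕ) : ℂ) - ((j : ℕ) : ℂ)) = (n : ℂ) := by push_cast [hn]; ring
  set x : ℂ := Complex.exp (2 * (Real.pi : ℂ) * Complex.I * ((n : ℂ) / s)) with hx
  have hterm : ∀ l : Fin s, Complex.exp (2 * (Real.pi : ℂ) * Complex.I *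
      (((((k : ℕ) : ℂ) - ((j : ℕ) : ℂ)) * ((l : ℕ) : ℂ)) / s)) = x ^ (l : ℕ) := by
    intro l
    rw [hx, ← Complex.exp_nat_mul, hcast]
    congr 1
    ring
  rw [Finset.sum_congr rfl fun l _ => hterm l]
  rw [Fin.sum_univ_eq_sum_range (fun i => x ^ i) s]
  by_cases h : j = k
  · have hn0 : n = 0 := by simp [hn, h]
    simp [hx, hn0, h]
  · have hjk : (j : ℕ) ≠ (k : ℕ) := fun hc => h (Fin.ext hc)
    have hn0 : n ≠ 0 := by omega
    have habs : n.natAbs < s := by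
      have := j.isLt; have := k.isLt; omega
    have hx1 : x ≠ 1 := exp_ne_one s hs n hn0 habs
    rw [geom_sum_eq hx1]
    have hxs : x ^ s = 1 := by
      rw [hx, ← Complex.exp_nat_mul]
      have harg : (s : ℂ) * (2 * (Real.pi : ℂ) * Complex.I * ((n : ℂ) / s)) =
          (n : ℂ) * (2 * (Real.pi : ℂ) * Complex.I) := by
        field_simp
      rw [harg, Complex.exp_int_mul_two_pi_mul_I]
    rw [hxs]
    simp [h]

lemma Umat_mul_conjTranspose (s : ℕ) (hs : 0 < s) (t : ℝ) :
    Umat s t * (Umat s t)ᴴ = 1 := by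
  have hs' : (s : ℂ) ≠ 0 := Nat.cast_ne_zero.mpr hs.ne'
  ext j k
  rw [Matrix.mul_apply, Matrix.one_apply]
  have hterm : ∀ l : Fin s, Umat s t j l * (Umat s t)ᴴ l k =
      (s : ℂ)⁻¹ * (Complex.exp (2 * (Real.pi : ℂ) * Complex.I *
          ((((k : ℕ) : ℂ) - ((j : ℕ) : ℂ)) * (t : ℂ) / s)) *
        Complex.exp (2 * (Real.pi : ℂ) * Complex.I *
          (((((k : ℕ) : ℂ) - ((j : ℕ) : ℂ)) * ((l : ℕ) : ℂ)) / s))) := by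
    intro l
    rw [Matrix.conjTranspose_apply]
    show ((1 / Real.sqrt s : ℝ) : ℂ) * _ * star (((1 / Real.sqrt s : ℝ) : ℂ) * _) = _
    rw [star_mul']
    rw [Complex.star_def, Complex.conj_ofReal, ← Complex.exp_conj]
    rw [mul_mul_mul_comm]
    rw [← Complex.exp_add, ← Complex.exp_add]
    congr 1
    · rw [← Complex.ofReal_mul]
      have : (1 / Real.sqrt s) * (1 / Real.sqrt s) = (s : ℝ)⁻¹ := by
        rw [div_mul_div_comm, one_mul, Real.mul_self_sqrt (Nat.cast_nonneg s), one_div]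
      rw [this, Complex.ofReal_inv, Complex.ofReal_natCast]
    · simp only [_root_.map_mul, map_div₀, _root_.map_sub, _root_.map_add, _root_.map_one,
        _root_.map_ofNat, Complex.conj_I, Complex.conj_ofReal, map_natCast]
      field_simp
      ring
  rw [Finset.sum_congr rfl fun l _ => hterm l, ← Finset.mul_sum, ← Finset.mul_sum,
    sum_exp s hs j k]
  by_cases h : j = k
  · subst h
    simp [hs']
  · simp [h]

lemma Umat_shift (s : ℕ) (hs : 0 < s) (t : ℝ) (j k : Fin s) :
    haveI : NeZero s := ⟨hs.ne'⟩
    Umat s (t + 1) j k = Umat s t j (k + 1) := by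
  haveI : NeZero s := ⟨hs.ne'⟩
  have hs' : (s : ℂ) ≠ 0 := Nat.cast_ne_zero.mpr hs.ne'
  have hval : ((k + 1 : Fin s) : ℕ) = ((k : ℕ) + 1) % s := by
    simp [Fin.add_def]
  unfold Umat
  simp only [Matrix.of_apply]
  congr 1
  by_cases hk : (k : ℕ) + 1 < s
  · rw [Nat.mod_eq_of_lt hk] at hval
    rw [hval]
    congr 1
    push_cast
    ring
  · have hk1 : (k : ℕ) + 1 = s := by have := k.isLt; omega
    rw [hk1, Nat.mod_self] at hval
    rw [hval]
    have hj1 : (j : ℕ) + 1 ≤ s := j.isLt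
    set n : ℕ := s - ((j : ℕ) + 1) with hn
    have hcast : (s : ℂ) - (((j : ℕ) : ℂ) + 1) = ((n : ℤ) : ℂ) := by
      push_cast [hn, Nat.cast_sub hj1]
      ring
    have harg : 2 * (Real.pi : ℂ) * Complex.I *
        (((s : ℂ) - (((j : ℕ) : ℂ) + 1)) * (((t + 1 : ℝ) : ℂ) + (((k : ℕ) : ℂ) + 1) - 1) / s) =
        2 * (Real.pi : ℂ) * Complex.I *
        (((s : ℂ) - (((j : ℕ) : ℂ) + 1)) * ((t : ℂ) + (((0 : ℕ) : ℂ) + 1) - 1) / s) +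
        ((n : ℤ) : ℂ) * (2 * (Real.pi : ℂ) * Complex.I) := by
      rw [← hcast]
      have hkc : ((k : ℕ) : ℂ) = (s : ℂ) - 1 := by
        have h' : ((k : ℕ) + 1 : ℕ) = s := hk1
        push_cast [← h']
        ring
      rw [hkc]
      push_cast
      field_simp
      ring
    rw [harg, Complex.exp_add, Complex.exp_int_mul_two_pi_mul_I, mul_one]

end BDaux

open Complex Matrix BDaux

/-- The connecting map of the Bunce–Deddens inductive system maps 1-periodic continuous
matrix functions to 1-periodic continuous matrix functions, and is a unital injective
*-homomorphism.  Here the level-`m` circle algebra consists of continuous `1`-periodic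
functions with values in matrices of size `σ m · d` where `d = ⊠σ_{m-1}`, indexed by
`Fin (σ m) × Fin d`; `U` is the `σ m`-dimensional unitary `U_{σ m}` tensored with the
identity, and `Θ a` is the block-diagonal rescaling of `a`. -/
theorem stmt13 (σ : ℕ → ℕ) (hσ : ∀ m, 1 ≤ m → 2 ≤ σ m) (m : ℕ) (hm : 1 ≤ m)
    (d : ℕ) (hd : d = ∏ j ∈ Finset.Icc 1 (m - 1), σ j) :
    let s := σ m
    let U : ℝ → Matrix (Fin s × Fin d) (Fin s × Fin d) ℂ :=
      fun t => Matrix.kroneckerMap (· * ·) (Umat s t) (1 : Matrix (Fin d) (Fin d) ℂ)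
    let Θ : (ℝ → Matrix (Fin d) (Fin d) ℂ) → ℝ → Matrix (Fin s × Fin d) (Fin s × Fin d) ℂ :=
      fun a t => Matrix.of fun p q =>
        if p.1 = q.1 then a ((t + ((p.1 : ℕ) : ℝ)) / s) p.2 q.2 else 0
    let Φ : (ℝ → Matrix (Fin d) (Fin d) ℂ) → ℝ → Matrix (Fin s × Fin d) (Fin s × Fin d) ℂ :=
      fun a t => U t * Θ a t * (U t).conjTranspose
    (∀ a : ℝ → Matrix (Fin d) (Fin d) ℂ, Continuous a → Function.Periodic a 1 →
        Continuous (Φ a) ∧ Function.Periodic (Φ a) 1) ∧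
    (Φ (fun _ => 1) = fun _ => 1) ∧
    (∀ a b, Φ (a * b) = Φ a * Φ b) ∧
    (∀ a b, Φ (a + b) = Φ a + Φ b) ∧
    (∀ (c : ℂ) (a), Φ (c • a) = c • Φ a) ∧
    (∀ a, Φ (star a) = star (Φ a)) ∧
    Function.Injective Φ := by
  intro s U Θ Φ
  have hs : 0 < s := lt_of_lt_of_le two_pos (hσ m hm)
  haveI : NeZero s := ⟨hs.ne'⟩
  have hsR : (s : ℝ) ≠ 0 := Nat.cast_ne_zero.mpr hs.ne'
  have hΘ : ∀ (a : ℝ → Matrix (Fin d) (Fin d) ℂ) (t : ℝ) (p q : Fin s × Fin d),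
      Θ a t p q = if p.1 = q.1 then a ((t + ((p.1 : ℕ) : ℝ)) / s) p.2 q.2 else 0 :=
    fun _ _ _ _ => rfl
  -- Kronecker helper lemmas
  have hkstar : ∀ A : Matrix (Fin s) (Fin s) ℂ,
      (Matrix.kroneckerMap (· * ·) A (1 : Matrix (Fin d) (Fin d) ℂ))ᴴ =
        Matrix.kroneckerMap (· * ·) Aᴴ (1 : Matrix (Fin d) (Fin d) ℂ) := by
    intro A
    ext ⟨p1, p2⟩ ⟨q1, q2⟩
    simp only [Matrix.conjTranspose_apply, Matrix.kroneckerMap_apply, Matrix.one_apply,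
      star_mul']
    by_cases h : p2 = q2 <;> simp [h, eq_comm, mul_comm]
  have hkmul : ∀ A B : Matrix (Fin s) (Fin s) ℂ,
      Matrix.kroneckerMap (· * ·) A (1 : Matrix (Fin d) (Fin d) ℂ) *
        Matrix.kroneckerMap (· * ·) B (1 : Matrix (Fin d) (Fin d) ℂ) =
        Matrix.kroneckerMap (· * ·) (A * B) (1 : Matrix (Fin d) (Fin d) ℂ) := by
    intro A B
    have := Matrix.mul_kronecker_mul A B (1 : Matrix (Fin d) (Fin d) ℂ) (1 : Matrix (Fin d) (Fin d) ℂ)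
    rw [Matrix.mul_one] at this
    exact this.symm
  have hkone : Matrix.kroneckerMap (· * ·) (1 : Matrix (Fin s) (Fin s) ℂ)
      (1 : Matrix (Fin d) (Fin d) ℂ) = 1 := Matrix.one_kronecker_one
  -- unitarity of U
  have hUH : ∀ t, (U t)ᴴ = Matrix.kroneckerMap (· * ·) ((Umat s t)ᴴ)
      (1 : Matrix (Fin d) (Fin d) ℂ) := fun t => hkstar (Umat s t)
  have hU1 : ∀ t, U t * (U t)ᴴ = 1 := by
    intro t
    rw [hUH t]
    show Matrix.kroneckerMap (· * ·) (Umat s t) 1 * _ = 1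
    rw [hkmul, Umat_mul_conjTranspose s hs t, hkone]
  have hU2 : ∀ t, (U t)ᴴ * U t = 1 := fun t => mul_eq_one_comm.mp (hU1 t)
  -- Θ is multiplicative / additive / etc.
  have hΘmul : ∀ (a b : ℝ → Matrix (Fin d) (Fin d) ℂ) (t : ℝ),
      Θ (a * b) t = Θ a t * Θ b t := by
    intro a b t
    ext ⟨p1, p2⟩ ⟨q1, q2⟩
    have hx0 : ∀ x ∈ Finset.univ, x ≠ q1 →
        (∑ y : Fin d, Θ a t (p1, p2) (x, y) * Θ b t (x, y) (q1, q2)) = 0 := by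
      intro x _ hx
      simp [hΘ, hx]
    rw [Matrix.mul_apply, Fintype.sum_prod_type,
      Finset.sum_eq_single q1 hx0 (fun h => absurd (Finset.mem_univ q1) h)]
    simp only [hΘ]
    by_cases h : p1 = q1
    · subst h
      simp [Pi.mul_apply, Matrix.mul_apply]
    · simp [h]
  have hΘadd : ∀ (a b : ℝ → Matrix (Fin d) (Fin d) ℂ) (t : ℝ),
      Θ (a + b) t = Θ a t + Θ b t := by
    intro a b t
    ext ⟨p1, p2⟩ ⟨q1, q2⟩
    rw [Matrix.add_apply]
    simp only [hΘ]
    by_cases h : p1 = q1 <;> simp [h]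
  have hΘsmul : ∀ (c : ℂ) (a : ℝ → Matrix (Fin d) (Fin d) ℂ) (t : ℝ),
      Θ (c • a) t = c • Θ a t := by
    intro c a t
    ext ⟨p1, p2⟩ ⟨q1, q2⟩
    rw [Matrix.smul_apply]
    simp only [hΘ]
    by_cases h : p1 = q1 <;> simp [h]
  have hΘstar : ∀ (a : ℝ → Matrix (Fin d) (Fin d) ℂ) (t : ℝ),
      Θ (star a) t = (Θ a t)ᴴ := by
    intro a t
    ext ⟨p1, p2⟩ ⟨q1, q2⟩
    rw [Matrix.conjTranspose_apply]
    simp only [hΘ]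
    by_cases h : p1 = q1
    · subst h
      simp [Pi.star_apply, Matrix.star_apply]
    · simp [h, Ne.symm h]
  have hΘone : ∀ t : ℝ, Θ (fun _ => 1) t = 1 := by
    intro t
    ext ⟨p1, p2⟩ ⟨q1, q2⟩
    rw [hΘ (fun _ => (1 : Matrix (Fin d) (Fin d) ℂ)) t (p1, p2) (q1, q2)]
    by_cases h : p1 = q1
    · subst h
      by_cases h2 : p2 = q2
      · subst h2
        simp [Matrix.one_apply]
      · simp [Matrix.one_apply, h2, Prod.ext_iff]
    · simp [Matrix.one_apply, h, Prod.ext_iff]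
  -- the shift matrix
  set R : Matrix (Fin s) (Fin s) ℂ :=
    Matrix.of (fun l k => if l = k + 1 then 1 else 0) with hR
  set W : Matrix (Fin s × Fin d) (Fin s × Fin d) ℂ :=
    Matrix.kroneckerMap (· * ·) R (1 : Matrix (Fin d) (Fin d) ℂ) with hW
  have hRR : R * Rᴴ = 1 := by
    ext i i'
    rw [Matrix.mul_apply, Matrix.one_apply]
    have key : ∀ (c : Fin s) (l : Fin s), (c = l + 1) ↔ (l = c - 1) := by
      intro c l
      constructor
      · rintro rfl; simp
      · rintro rfl; simp
    simp only [hR, Matrix.conjTranspose_apply, Matrix.of_apply]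
    simp only [key]
    simp only [apply_ite (star : ℂ → ℂ), star_one, star_zero]
    rw [Finset.sum_congr rfl (fun l _ => by
      rw [show ((if l = i - 1 then (1:ℂ) else 0) * (if l = i' - 1 then (1:ℂ) else 0)) =
        (if l = i - 1 then (if l = i' - 1 then (1:ℂ) else 0) else 0) from by
          by_cases h : l = i - 1 <;> simp [h]])]
    rw [Finset.sum_ite_eq' Finset.univ (i - 1) (fun l => if l = i' - 1 then (1:ℂ) else 0)]
    simp only [Finset.mem_univ, if_true]
    by_cases h : i = i'
    · subst h; simp
    · have : i - 1 ≠ i' - 1 := fun hc => h (by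
        have h2 := congrArg (· + 1) hc
        simpa using h2)
      simp [this, h]
  have hWW : W * Wᴴ = 1 := by
    rw [hW, hkstar, hkmul, hRR, hkone]
  have hWW' : Wᴴ * W = 1 := mul_eq_one_comm.mp hWW
  -- shift of U
  have hUmatshift : ∀ t : ℝ, Umat s (t + 1) = Umat s t * R := by
    intro t
    ext j k
    rw [Matrix.mul_apply]
    simp only [hR, Matrix.of_apply]
    rw [Finset.sum_congr rfl (fun l _ => by
      rw [show Umat s t j l * (if l = k + 1 then (1:ℂ) else 0) =
        (if l = k + 1 then Umat s t j l else 0) from by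
          by_cases h : l = k + 1 <;> simp [h]])]
    rw [Finset.sum_ite_eq' Finset.univ (k + 1) (fun l => Umat s t j l)]
    simp only [Finset.mem_univ, if_true]
    exact Umat_shift s hs t j k
  have hUshift : ∀ t : ℝ, U (t + 1) = U t * W := by
    intro t
    show Matrix.kroneckerMap (· * ·) (Umat s (t + 1)) 1 = _
    rw [hUmatshift t, hW, ← hkmul]
  -- shift of Θ for periodic a
  have hΘshift : ∀ (a : ℝ → Matrix (Fin d) (Fin d) ℂ), Function.Periodic a 1 →
      ∀ t : ℝ, W * Θ a (t + 1) = Θ a t * W := by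
    intro a ha t
    ext ⟨j, p⟩ ⟨k, q⟩
    have hL0 : ∀ x ∈ Finset.univ, x ≠ k →
        (∑ y : Fin d, W (j, p) (x, y) * Θ a (t + 1) (x, y) (k, q)) = 0 := by
      intro x _ hx
      simp [hΘ, hx]
    have hR0 : ∀ x ∈ Finset.univ, x ≠ j →
        (∑ y : Fin d, Θ a t (j, p) (x, y) * W (x, y) (k, q)) = 0 := by
      intro x _ hx
      simp [hΘ, (Ne.symm hx : j ≠ x)]
    rw [Matrix.mul_apply, Matrix.mul_apply, Fintype.sum_prod_type, Fintype.sum_prod_type,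
      Finset.sum_eq_single k hL0 (fun h => absurd (Finset.mem_univ k) h),
      Finset.sum_eq_single j hR0 (fun h => absurd (Finset.mem_univ j) h)]
    have hL1 : ∀ y ∈ Finset.univ, y ≠ p →
        W (j, p) (k, y) * Θ a (t + 1) (k, y) (k, q) = 0 := by
      intro y _ hy
      have : W (j, p) (k, y) = R j k * (0 : ℂ) := by
        show R j k * (1 : Matrix (Fin d) (Fin d) ℂ) p y = _
        rw [Matrix.one_apply_ne hy.symm]
      rw [this, mul_zero, zero_mul]
    have hR1 : ∀ y ∈ Finset.univ, y ≠ q →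
        Θ a t (j, p) (j, y) * W (j, y) (k, q) = 0 := by
      intro y _ hy
      have : W (j, y) (k, q) = R j k * (0 : ℂ) := by
        show R j k * (1 : Matrix (Fin d) (Fin d) ℂ) y q = _
        rw [Matrix.one_apply_ne hy]
      rw [this, mul_zero, mul_zero]
    rw [Finset.sum_eq_single p hL1 (fun h => absurd (Finset.mem_univ p) h),
      Finset.sum_eq_single q hR1 (fun h => absurd (Finset.mem_univ q) h)]
    have hWjk : ∀ (y : Fin d), W (j, y) (k, y) = R j k := by
      intro y
      show R j k * (1 : Matrix (Fin d) (Fin d) ℂ) y y = _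
      rw [Matrix.one_apply_eq, mul_one]
    rw [hWjk p, hWjk q]
    simp only [hΘ, hR, Matrix.of_apply]
    by_cases hj : j = k + 1
    · have hval : a ((t + 1 + ((k : ℕ) : ℝ)) / s) = a ((t + (((k + 1 : Fin s) : ℕ) : ℝ)) / s) := by
        have hvk : ((k + 1 : Fin s) : ℕ) = ((k : ℕ) + 1) % s := by simp [Fin.add_def]
        by_cases hk : (k : ℕ) + 1 < s
        · rw [Nat.mod_eq_of_lt hk] at hvk
          rw [hvk]
          congr 1
          push_cast
          ring
        · have hk1 : (k : ℕ) + 1 = s := by have := k.isLt; omega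
          rw [hk1, Nat.mod_self] at hvk
          rw [hvk]
          have hkR : ((k : ℕ) : ℝ) = (s : ℝ) - 1 := by
            have hc : ((k : ℕ) : ℝ) + 1 = (s : ℝ) := by exact_mod_cast hk1
            linarith
          have harg : (t + 1 + ((k : ℕ) : ℝ)) / s = t / s + 1 := by
            rw [hkR]
            field_simp
            ring
          rw [harg, ha (t / s)]
          norm_num
      rw [hval, hj]
      simp
    · have hj2 : k + 1 ≠ j := fun hc => hj hc.symm
      simp [hj, hj2]
  -- multiplicativity etc of Φ
  have hΦmul : ∀ a b, Φ (a * b) = Φ a * Φ b := by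
    intro a b
    funext t
    show U t * Θ (a * b) t * (U t)ᴴ = (U t * Θ a t * (U t)ᴴ) * (U t * Θ b t * (U t)ᴴ)
    rw [hΘmul]
    calc U t * (Θ a t * Θ b t) * (U t)ᴴ
        = U t * Θ a t * ((U t)ᴴ * U t) * (Θ b t * (U t)ᴴ) := by rw [hU2]; noncomm_ring
      _ = (U t * Θ a t * (U t)ᴴ) * (U t * Θ b t * (U t)ᴴ) := by noncomm_ring
  have hΦadd : ∀ a b, Φ (a + b) = Φ a + Φ b := by
    intro a b
    funext t
    show U t * Θ (a + b) t * (U t)ᴴ = U t * Θ a t * (U t)ᴴ + U t * Θ b t * (U t)ᴴ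
    rw [hΘadd]
    noncomm_ring
  have hΦsmul : ∀ (c : ℂ) a, Φ (c • a) = c • Φ a := by
    intro c a
    funext t
    show U t * Θ (c • a) t * (U t)ᴴ = c • (U t * Θ a t * (U t)ᴴ)
    rw [hΘsmul, Matrix.mul_smul, Matrix.smul_mul]
  have hΦstar : ∀ a, Φ (star a) = star (Φ a) := by
    intro a
    funext t
    show U t * Θ (star a) t * (U t)ᴴ = star (U t * Θ a t * (U t)ᴴ)
    rw [hΘstar, Matrix.star_eq_conjTranspose, Matrix.conjTranspose_mul,
      Matrix.conjTranspose_mul, Matrix.conjTranspose_conjTranspose]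
    noncomm_ring
  have hΦone : Φ (fun _ => 1) = fun _ => 1 := by
    funext t
    show U t * Θ (fun _ => 1) t * (U t)ᴴ = 1
    rw [hΘone t, Matrix.mul_one]
    exact hU1 t
  -- injectivity
  have hΦinj : Function.Injective Φ := by
    intro a b hab
    have hθ : ∀ t, Θ a t = Θ b t := by
      intro t
      have h1 : U t * Θ a t * (U t)ᴴ = U t * Θ b t * (U t)ᴴ := congrFun hab t
      have cancel : ∀ X : Matrix (Fin s × Fin d) (Fin s × Fin d) ℂ,
          (U t)ᴴ * (U t * X * (U t)ᴴ) * U t = X := by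
        intro X
        calc (U t)ᴴ * (U t * X * (U t)ᴴ) * U t
            = ((U t)ᴴ * U t) * X * ((U t)ᴴ * U t) := by noncomm_ring
          _ = X := by rw [hU2]; simp
      rw [← cancel (Θ a t), h1, cancel]
    funext t
    ext p q
    have h2 := congrFun (congrFun (hθ ((s : ℝ) * t)) ((0 : Fin s), p)) ((0 : Fin s), q)
    have harg : ((s : ℝ) * t + (((0 : Fin s) : ℕ) : ℝ)) / s = t := by
      simp only [Fin.val_zero, Nat.cast_zero, add_zero]
      exact mul_div_cancel_left₀ t hsR
    rw [hΘ, hΘ, if_pos rfl, if_pos rfl, harg] at h2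
    exact h2
  -- continuity and periodicity
  refine ⟨?_, hΦone, hΦmul, hΦadd, hΦsmul, hΦstar, hΦinj⟩
  intro a hacont haper
  constructor
  · have hUcont : Continuous U := by
      apply continuous_matrix
      rintro ⟨i1, i2⟩ ⟨j1, j2⟩
      show Continuous fun t : ℝ => Umat s t i1 j1 * (1 : Matrix (Fin d) (Fin d) ℂ) i2 j2
      apply Continuous.mul _ continuous_const
      show Continuous fun t : ℝ => ((1 / Real.sqrt s : ℝ) : ℂ) *
        Complex.exp (2 * (Real.pi : ℂ) * Complex.I *
          (((s : ℂ) - (((i1 : ℕ) : ℂ) + 1)) * (((t : ℝ) : ℂ) + (((j1 : ℕ) : ℂ) + 1) - 1) / (s : ℂ)))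
      fun_prop
    have hΘcont : Continuous (Θ a) := by
      apply continuous_matrix
      rintro ⟨p1, p2⟩ ⟨q1, q2⟩
      show Continuous fun t =>
        if (p1, p2).1 = (q1, q2).1 then a ((t + ((p1 : ℕ) : ℝ)) / s) p2 q2 else 0
      by_cases h : p1 = q1
      · simp only [h, if_true]
        have hc : Continuous fun t : ℝ => (t + ((q1 : ℕ) : ℝ)) / s := by fun_prop
        exact (continuous_apply q2).comp
          ((continuous_apply p2).comp (hacont.comp hc))
      · simp only [h, if_false]
        exact continuous_const
    exact (hUcont.matrix_mul hΘcont).matrix_mul hUcont.matrix_conjTranspose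
  · intro t
    show U (t + 1) * Θ a (t + 1) * (U (t + 1))ᴴ = U t * Θ a t * (U t)ᴴ
    have hθs : Θ a (t + 1) = Wᴴ * Θ a t * W := by
      have h1 := hΘshift a haper t
      calc Θ a (t + 1) = (Wᴴ * W) * Θ a (t + 1) := by rw [hWW']; simp
        _ = Wᴴ * (W * Θ a (t + 1)) := by noncomm_ring
        _ = Wᴴ * (Θ a t * W) := by rw [h1]
        _ = Wᴴ * Θ a t * W := by noncomm_ring
    rw [hUshift t, hθs, Matrix.conjTranspose_mul]
    calc (U t * W) * (Wᴴ * Θ a t * W) * (Wᴴ * (U t)ᴴ)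
        = U t * ((W * Wᴴ) * Θ a t * (W * Wᴴ)) * (U t)ᴴ := by noncomm_ring
      _ = U t * Θ a t * (U t)ᴴ := by rw [hWW]; simp
end
end

section
/- Let a ∈ C_σ,{m−1} (continuous 1-periodic M_{⊠σ_{m−1}}(ℂ)-valued functions) and define θ(a)(t) = diag(a(t/σ_m), a((t+1)/σ_m), …, a((t+σ_m−1)/σ_m)) ∈ M_{⊠σ_m}(ℂ). Then the Lipschitz seminorm of θ(a) with respect to the operator norm equals (1/σ_m) times the Lipschitz seminorm of a: l(θ(a)) = l(a)/σ_m. -/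
open scoped ENNReal

noncomputable section

variable {s d : ℕ}

/-- block diagonal matrix -/
private def blk (B : Fin s → Matrix (Fin d) (Fin d) ℂ) :
    Matrix (Fin s × Fin d) (Fin s × Fin d) ℂ :=
  Matrix.of fun p q => if p.1 = q.1 then B p.1 p.2 q.2 else 0

private lemma sqnorm (n : Type*) [Fintype n] (x : EuclideanSpace ℂ n) :
    ‖x‖ ^ 2 = ∑ i, ‖x i‖ ^ 2 := by
  rw [EuclideanSpace.norm_eq, Real.sq_sqrt]
  exact Finset.sum_nonneg fun _ _ => sq_nonneg _

private lemma blk_apply (B : Fin s → Matrix (Fin d) (Fin d) ℂ)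
    (x : EuclideanSpace ℂ (Fin s × Fin d)) (j : Fin s) (i : Fin d) :
    (Matrix.toEuclideanCLM (𝕜 := ℂ) (blk B) x) (j, i)
      = ∑ i', B j i i' * x (j, i') := by
  have := congrFun (Matrix.ofLp_toEuclideanCLM (𝕜 := ℂ) (blk B) x) (j, i)
  rw [this]
  simp only [Matrix.toLin'_apply, Matrix.mulVec, dotProduct]
  rw [Fintype.sum_prod_type]
  rw [Finset.sum_eq_single j]
  · simp [blk]
  · intro k _ hk
    simp [blk, (Ne.symm hk : ¬ j = k)]
  · simp

private lemma blk_norm_le (B : Fin s → Matrix (Fin d) (Fin d) ℂ) (C : ℝ) (hC : 0 ≤ C)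
    (h : ∀ j, ‖Matrix.toEuclideanCLM (𝕜 := ℂ) (B j)‖ ≤ C) :
    ‖Matrix.toEuclideanCLM (𝕜 := ℂ) (blk B)‖ ≤ C := by
  refine ContinuousLinearMap.opNorm_le_bound _ hC fun x => ?_
  have hnn : 0 ≤ C * ‖x‖ := mul_nonneg hC (norm_nonneg _)
  rw [← Real.sqrt_sq (norm_nonneg _), ← Real.sqrt_sq hnn]
  apply Real.sqrt_le_sqrt
  rw [sqnorm, Fintype.sum_prod_type, mul_pow, sqnorm, Fintype.sum_prod_type,
    Finset.mul_sum]
  apply Finset.sum_le_sum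
  intro j _
  -- restrict x to block j
  set xj : EuclideanSpace ℂ (Fin d) := (WithLp.equiv 2 _).symm (fun i => x (j, i)) with hxj
  have happ : ∀ i, (Matrix.toEuclideanCLM (𝕜 := ℂ) (blk B) x) (j, i)
      = (Matrix.toEuclideanCLM (𝕜 := ℂ) (B j) xj) i := by
    intro i
    rw [blk_apply]
    have := congrFun (Matrix.ofLp_toEuclideanCLM (𝕜 := ℂ) (B j) xj) i
    rw [this]
    simp only [Matrix.toLin'_apply, Matrix.mulVec, dotProduct]
    rfl
  calc ∑ i, ‖(Matrix.toEuclideanCLM (𝕜 := ℂ) (blk B) x) (j, i)‖ ^ 2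
      = ‖Matrix.toEuclideanCLM (𝕜 := ℂ) (B j) xj‖ ^ 2 := by
        rw [sqnorm]; exact Finset.sum_congr rfl fun i _ => by rw [happ]
    _ ≤ (C * ‖xj‖) ^ 2 := by
        apply pow_le_pow_left₀ (norm_nonneg _)
        exact ((Matrix.toEuclideanCLM (𝕜 := ℂ) (B j)).le_opNorm xj).trans
          (mul_le_mul_of_nonneg_right (h j) (norm_nonneg _))
    _ = C ^ 2 * ∑ i, ‖x (j, i)‖ ^ 2 := by
        rw [mul_pow, sqnorm]; rfl

private lemma blk_norm_ge (B : Fin s → Matrix (Fin d) (Fin d) ℂ) (j : Fin s) :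
    ‖Matrix.toEuclideanCLM (𝕜 := ℂ) (B j)‖ ≤ ‖Matrix.toEuclideanCLM (𝕜 := ℂ) (blk B)‖ := by
  refine ContinuousLinearMap.opNorm_le_bound _ (norm_nonneg _) fun v => ?_
  set ev : EuclideanSpace ℂ (Fin s × Fin d) :=
    (WithLp.equiv 2 _).symm (fun p => if p.1 = j then v p.2 else 0) with hev
  have hev_norm : ‖ev‖ = ‖v‖ := by
    rw [← Real.sqrt_sq (norm_nonneg ev), ← Real.sqrt_sq (norm_nonneg v)]
    congr 1
    rw [sqnorm, sqnorm, Fintype.sum_prod_type, Finset.sum_eq_single j]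
    · refine Finset.sum_congr rfl fun i _ => ?_
      simp [ev]
    · intro k _ hk
      apply Finset.sum_eq_zero
      intro i _
      simp [ev, hk]
    · simp
  have hBv : ‖Matrix.toEuclideanCLM (𝕜 := ℂ) (B j) v‖
      ≤ ‖Matrix.toEuclideanCLM (𝕜 := ℂ) (blk B) ev‖ := by
    rw [EuclideanSpace.norm_eq, EuclideanSpace.norm_eq]
    apply Real.sqrt_le_sqrt
    rw [Fintype.sum_prod_type]
    have key : ∀ i, (Matrix.toEuclideanCLM (𝕜 := ℂ) (B j) v) i
        = (Matrix.toEuclideanCLM (𝕜 := ℂ) (blk B) ev) (j, i) := by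
      intro i
      rw [blk_apply]
      have := congrFun (Matrix.ofLp_toEuclideanCLM (𝕜 := ℂ) (B j) v) i
      rw [this]
      simp only [Matrix.toLin'_apply, Matrix.mulVec, dotProduct]
      refine Finset.sum_congr rfl fun i' _ => ?_
      simp [ev]
    calc ∑ i, ‖(Matrix.toEuclideanCLM (𝕜 := ℂ) (B j) v) i‖ ^ 2
        = ∑ i, ‖(Matrix.toEuclideanCLM (𝕜 := ℂ) (blk B) ev) (j, i)‖ ^ 2 :=
          Finset.sum_congr rfl fun i _ => by rw [key]
      _ ≤ ∑ k, ∑ i, ‖(Matrix.toEuclideanCLM (𝕜 := ℂ) (blk B) ev) (k, i)‖ ^ 2 :=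
          Finset.single_le_sum (f := fun k => ∑ i, ‖(Matrix.toEuclideanCLM (𝕜 := ℂ) (blk B) ev) (k, i)‖ ^ 2)
            (fun k _ => Finset.sum_nonneg fun _ _ => sq_nonneg _) (Finset.mem_univ j)
  calc ‖Matrix.toEuclideanCLM (𝕜 := ℂ) (B j) v‖
      ≤ ‖Matrix.toEuclideanCLM (𝕜 := ℂ) (blk B) ev‖ := hBv
    _ ≤ ‖Matrix.toEuclideanCLM (𝕜 := ℂ) (blk B)‖ * ‖ev‖ :=
        ContinuousLinearMap.le_opNorm _ _
    _ = ‖Matrix.toEuclideanCLM (𝕜 := ℂ) (blk B)‖ * ‖v‖ := by rw [hev_norm]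

/-- The block-diagonal rescaling `θ(a)(t) = diag(a(t/s), a((t+1)/s), …, a((t+s−1)/s))`
divides the Lipschitz seminorm (for the operator norm) exactly by `s`:
`l(θ(a)) = l(a)/s`. -/
theorem stmt16 (s : ℕ) (hs : 2 ≤ s) (d : ℕ) (a : ℝ → Matrix (Fin d) (Fin d) ℂ) :
    let θa : ℝ → Matrix (Fin s × Fin d) (Fin s × Fin d) ℂ :=
      fun t => Matrix.of fun p q =>
        if p.1 = q.1 then a ((t + ((p.1 : ℕ) : ℝ)) / s) p.2 q.2 else 0
    (⨆ p : {p : ℝ × ℝ // p.1 ≠ p.2},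
        ENNReal.ofReal
          (‖Matrix.toEuclideanCLM (𝕜 := ℂ) (θa p.1.1 - θa p.1.2)‖ / |p.1.1 - p.1.2|))
      = (⨆ p : {p : ℝ × ℝ // p.1 ≠ p.2},
          ENNReal.ofReal
            (‖Matrix.toEuclideanCLM (𝕜 := ℂ) (a p.1.1 - a p.1.2)‖ / |p.1.1 - p.1.2|))
        / (s : ℝ≥0∞) := by
  intro θa
  have hs0 : (0 : ℝ) < s := by
    have : (0 : ℕ) < s := by omega
    exact_mod_cast this
  have hsne : (s : ℝ) ≠ 0 := ne_of_gt hs0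
  have hspos : 0 < s := by omega
  have hblk : ∀ x y : ℝ, θa x - θa y
      = blk (fun j => a ((x + (j : ℕ)) / s) - a ((y + (j : ℕ)) / s)) := by
    intro x y
    ext p q
    simp only [θa, blk, Matrix.sub_apply, Matrix.of_apply]
    by_cases h : p.1 = q.1 <;> simp [h]
  rw [ENNReal.iSup_div]
  apply le_antisymm
  · apply iSup_le
    rintro ⟨⟨x, y⟩, hxy⟩
    simp only
    -- pick block with maximal norm
    have : Nonempty (Fin s) := ⟨⟨0, hspos⟩⟩
    obtain ⟨j₀, hj₀⟩ := Finite.exists_max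
      (fun j : Fin s => ‖Matrix.toEuclideanCLM (𝕜 := ℂ)
        (a ((x + (j : ℕ)) / s) - a ((y + (j : ℕ)) / s))‖)
    set u : ℝ := (x + (j₀ : ℕ)) / s with hu
    set v : ℝ := (y + (j₀ : ℕ)) / s with hv
    have huv : u ≠ v := by
      intro h
      apply hxy
      have := h
      rw [hu, hv, div_left_inj' hsne] at this
      linarith
    have hsub : u - v = (x - y) / s := by rw [hu, hv]; ring
    have habs : |u - v| = |x - y| / s := by
      rw [hsub, abs_div, abs_of_pos hs0]
    have hnorm : ‖Matrix.toEuclideanCLM (𝕜 := ℂ) (θa x - θa y)‖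
        ≤ ‖Matrix.toEuclideanCLM (𝕜 := ℂ) (a u - a v)‖ := by
      rw [hblk]
      exact blk_norm_le _ _ (norm_nonneg _) hj₀
    have hxyne : |x - y| ≠ 0 := by
      simp only [ne_eq, abs_eq_zero, sub_eq_zero]; exact hxy
    have hxypos : 0 < |x - y| := lt_of_le_of_ne (abs_nonneg _) (Ne.symm hxyne)
    have hchain : ‖Matrix.toEuclideanCLM (𝕜 := ℂ) (θa x - θa y)‖ / |x - y|
        ≤ (‖Matrix.toEuclideanCLM (𝕜 := ℂ) (a u - a v)‖ / |u - v|) / s := by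
      rw [habs]
      rw [div_div_eq_mul_div, div_div]
      rw [div_le_div_iff₀ hxypos (by positivity)]
      calc ‖Matrix.toEuclideanCLM (𝕜 := ℂ) (θa x - θa y)‖ * (|x - y| * s)
          = ‖Matrix.toEuclideanCLM (𝕜 := ℂ) (θa x - θa y)‖ * s * |x - y| := by ring
        _ ≤ ‖Matrix.toEuclideanCLM (𝕜 := ℂ) (a u - a v)‖ * s * |x - y| := by
            have := mul_le_mul_of_nonneg_right
              (mul_le_mul_of_nonneg_right hnorm hs0.le) hxypos.le
            exact this
    calc ENNReal.ofReal (‖Matrix.toEuclideanCLM (𝕜 := ℂ) (θa x - θa y)‖ / |x - y|)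
        ≤ ENNReal.ofReal ((‖Matrix.toEuclideanCLM (𝕜 := ℂ) (a u - a v)‖ / |u - v|) / s) :=
          ENNReal.ofReal_le_ofReal hchain
      _ = ENNReal.ofReal (‖Matrix.toEuclideanCLM (𝕜 := ℂ) (a u - a v)‖ / |u - v|)
            / (s : ℝ≥0∞) := by
          rw [ENNReal.ofReal_div_of_pos hs0, ENNReal.ofReal_natCast]
      _ ≤ _ := le_iSup (f := fun p : {p : ℝ × ℝ // p.1 ≠ p.2} =>
            ENNReal.ofReal (‖Matrix.toEuclideanCLM (𝕜 := ℂ) (a p.1.1 - a p.1.2)‖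
              / |p.1.1 - p.1.2|) / (s : ℝ≥0∞)) ⟨(u, v), huv⟩
  · apply iSup_le
    rintro ⟨⟨u, v⟩, huv⟩
    simp only
    set x : ℝ := s * u with hx
    set y : ℝ := s * v with hy
    have hxy : x ≠ y := by
      simp only [hx, hy, ne_eq, mul_eq_mul_left_iff]
      push_neg
      exact ⟨huv, hsne⟩
    have hzero : ((x + ((⟨0, hspos⟩ : Fin s) : ℕ)) / s) = u := by
      simp only [hx]
      field_simp
      simp
    have hzero' : ((y + ((⟨0, hspos⟩ : Fin s) : ℕ)) / s) = v := by
      simp only [hy]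
      field_simp
      simp
    have hnorm : ‖Matrix.toEuclideanCLM (𝕜 := ℂ) (a u - a v)‖
        ≤ ‖Matrix.toEuclideanCLM (𝕜 := ℂ) (θa x - θa y)‖ := by
      rw [hblk]
      have := blk_norm_ge
        (fun j : Fin s => a ((x + (j : ℕ)) / s) - a ((y + (j : ℕ)) / s)) ⟨0, hspos⟩
      rwa [hzero, hzero'] at this
    have habs : |x - y| = s * |u - v| := by
      rw [hx, hy, ← mul_sub, abs_mul, abs_of_pos hs0]
    have huvpos : 0 < |u - v| := by
      rw [abs_pos, sub_ne_zero]; exact huv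
    have hchain : (‖Matrix.toEuclideanCLM (𝕜 := ℂ) (a u - a v)‖ / |u - v|) / s
        ≤ ‖Matrix.toEuclideanCLM (𝕜 := ℂ) (θa x - θa y)‖ / |x - y| := by
      rw [habs, div_div]
      apply div_le_div_of_nonneg_right hnorm ?_ |>.trans_eq ?_
      · positivity
      · rw [mul_comm]
    calc ENNReal.ofReal (‖Matrix.toEuclideanCLM (𝕜 := ℂ) (a u - a v)‖ / |u - v|)
            / (s : ℝ≥0∞)
        = ENNReal.ofReal ((‖Matrix.toEuclideanCLM (𝕜 := ℂ) (a u - a v)‖ / |u - v|) / s) := by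
          rw [ENNReal.ofReal_div_of_pos hs0, ENNReal.ofReal_natCast]
      _ ≤ ENNReal.ofReal (‖Matrix.toEuclideanCLM (𝕜 := ℂ) (θa x - θa y)‖ / |x - y|) :=
          ENNReal.ofReal_le_ofReal hchain
      _ ≤ _ := le_iSup (f := fun p : {p : ℝ × ℝ // p.1 ≠ p.2} =>
            ENNReal.ofReal (‖Matrix.toEuclideanCLM (𝕜 := ℂ) (θa p.1.1 - θa p.1.2)‖
              / |p.1.1 - p.1.2|)) ⟨(x, y), hxy⟩
end
end
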